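/- Suppose K = 1 and that Assumption 2.1 and the ergodicity condition (2.6) hold. Then for every sign vector x ∈ {−1,1}^c there exists at least one β₀ ∈ (0,1) such that Σ_{i=1}^c h_i(β₀) = 0, where h_i is formed with the sign x_i. -/

import Mathlib

open scoped BigOperators
open Filter Set

/-- `Gval a β = Σ_{m=0}^∞ a_m β^m`, encoding `A_i(β) = Σ_{k=-∞}^K a_{k,i} β^{K-k}`
via the reindexing `m = K - k`. -/
noncomputable def Gval (a : ℕ → ℝ) (β : ℝ) : ℝ := ∑' m : ℕ, a m * β ^ m

/-- `A_i(1)`. -/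
noncomputable def Gone (a : ℕ → ℝ) : ℝ := ∑' m : ℕ, a m

/-- `A_i'(1) = Σ_{k=-∞}^K (K-k) a_{k,i}`. -/
noncomputable def Gder (a : ℕ → ℝ) : ℝ := ∑' m : ℕ, (m : ℝ) * a m

/-- `F_i(β) = β^K (A_i(1)+B_i(1)-C_i(1)-D_i(1)) - B_i(β) + C_i(β)`. -/
noncomputable def Fval (K : ℕ) (a b cc d : ℕ → ℝ) (β : ℝ) : ℝ :=
  β ^ K * (Gone a + Gone b - Gone cc - Gone d) - Gval b β + Gval cc β

/-- `h_i(β)` formed with the sign `x`. -/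
noncomputable def hval (K : ℕ) (a b cc d : ℕ → ℝ) (x β : ℝ) : ℝ :=
  x * Real.sqrt (Fval K a b cc d β ^ 2 + 4 * Gval a β * Gval d β)
    + Gval b β + Gval cc β - β ^ K * (Gone a + Gone b + Gone cc + Gone d)

section helpers
variable {a : ℕ → ℝ}

lemma summable_gval (ha : Summable a) (hnn : ∀ m, 0 ≤ a m) {β : ℝ} (h0 : 0 ≤ β) (h1 : β ≤ 1) :
    Summable (fun m => a m * β ^ m) := by
  refine Summable.of_nonneg_of_le (fun m => mul_nonneg (hnn m) (pow_nonneg h0 m)) (fun m => ?_) ha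
  calc a m * β ^ m ≤ a m * 1 := mul_le_mul_of_nonneg_left (pow_le_one₀ h0 h1) (hnn m)
    _ = a m := mul_one _

lemma gval_one : Gval a 1 = Gone a := by simp [Gval, Gone]

lemma gval_zero : Gval a 0 = a 0 := by
  rw [Gval, tsum_eq_single 0 (fun m hm => by simp [zero_pow hm])]; simp

lemma gval_continuousOn (ha : Summable a) (hnn : ∀ m, 0 ≤ a m) :
    ContinuousOn (fun β => Gval a β) (Set.Icc (0:ℝ) 1) := by
  refine continuousOn_tsum (fun m => (continuous_const.mul (continuous_pow m)).continuousOn)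
    ha (fun m β hβ => ?_)
  rw [Real.norm_eq_abs, abs_mul, abs_of_nonneg (hnn m), abs_of_nonneg (pow_nonneg hβ.1 m)]
  calc a m * β ^ m ≤ a m * 1 := mul_le_mul_of_nonneg_left (pow_le_one₀ hβ.1 hβ.2) (hnn m)
    _ = a m := mul_one _

lemma mygeom_le {β : ℝ} (h0 : 0 ≤ β) (h1 : β ≤ 1) (m : ℕ) :
    ∑ j ∈ Finset.range m, β ^ j ≤ (m : ℝ) := by
  have : ∑ j ∈ Finset.range m, β ^ j ≤ ∑ j ∈ Finset.range m, (1:ℝ) :=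
    Finset.sum_le_sum fun j _ => pow_le_one₀ h0 h1
  simpa [nsmul_eq_mul] using this

lemma mygeom_ge {β : ℝ} (h0 : 0 ≤ β) (h1 : β ≤ 1) (m : ℕ) :
    (m : ℝ) * β ^ m ≤ ∑ j ∈ Finset.range m, β ^ j := by
  have := Finset.card_nsmul_le_sum (Finset.range m) (fun j => β ^ j) (β ^ m)
    (fun j hj => pow_le_pow_of_le_one h0 h1 (le_of_lt (Finset.mem_range.1 hj)))
  simpa [nsmul_eq_mul] using this

lemma slope_bounds (ha : Summable a) (hnn : ∀ m, 0 ≤ a m)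
    (hd : Summable (fun m : ℕ => (m : ℝ) * a m)) {β : ℝ}
    (h0 : 0 ≤ β) (h1 : β ≤ 1) (hne : β ≠ 1) :
    Gval (fun m => (m : ℝ) * a m) β ≤ slope (fun β => Gval a β) 1 β ∧
      slope (fun β => Gval a β) 1 β ≤ Gder a := by
  have hsum1 : Summable (fun m => a m * β ^ m) := summable_gval ha hnn h0 h1
  have hsum2 : Summable (fun m => a m * ∑ j ∈ Finset.range m, β ^ j) := by
    refine Summable.of_nonneg_of_le
      (fun m => mul_nonneg (hnn m) (Finset.sum_nonneg fun j _ => pow_nonneg h0 j))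
      (fun m => ?_) hd
    calc a m * ∑ j ∈ Finset.range m, β ^ j ≤ a m * m :=
          mul_le_mul_of_nonneg_left (mygeom_le h0 h1 m) (hnn m)
      _ = (m : ℝ) * a m := mul_comm _ _
  have hslope : slope (fun β => Gval a β) 1 β
      = ∑' m, a m * ∑ j ∈ Finset.range m, β ^ j := by
    rw [slope_def_field, Gval, Gval, ← Summable.tsum_sub hsum1 (summable_gval ha hnn (by norm_num) le_rfl)]
    rw [← tsum_div_const]
    refine tsum_congr fun m => ?_
    have hmid : a m * β ^ m - a m * 1 ^ m = (β - 1) * (a m * ∑ j ∈ Finset.range m, β ^ j) := by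
      linear_combination (-(a m)) * geom_sum_mul β m
    rw [hmid, mul_comm (β - 1), mul_div_assoc,
      div_self (sub_ne_zero_of_ne hne), mul_one]
  constructor
  · rw [hslope, Gval]
    refine Summable.tsum_le_tsum (fun m => ?_)
      (summable_gval hd (fun m => mul_nonneg (Nat.cast_nonneg m) (hnn m)) h0 h1) hsum2
    calc (m : ℝ) * a m * β ^ m = a m * ((m:ℝ) * β ^ m) := by ring
      _ ≤ a m * ∑ j ∈ Finset.range m, β ^ j :=
          mul_le_mul_of_nonneg_left (mygeom_ge h0 h1 m) (hnn m)
  · rw [hslope, Gder]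
    refine Summable.tsum_le_tsum (fun m => ?_) hsum2 hd
    calc a m * ∑ j ∈ Finset.range m, β ^ j ≤ a m * m :=
          mul_le_mul_of_nonneg_left (mygeom_le h0 h1 m) (hnn m)
      _ = (m : ℝ) * a m := mul_comm _ _

lemma hasDerivWithinAt_gval (ha : Summable a) (hnn : ∀ m, 0 ≤ a m)
    (hd : Summable (fun m : ℕ => (m : ℝ) * a m)) :
    HasDerivWithinAt (fun β => Gval a β) (Gder a) (Set.Icc (0:ℝ) 1) 1 := by
  rw [hasDerivWithinAt_iff_tendsto_slope]
  set t : ℕ → ℝ := fun m => (m : ℝ) * a m with ht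
  have htnn : ∀ m, 0 ≤ t m := fun m => mul_nonneg (Nat.cast_nonneg m) (hnn m)
  have hlow : Tendsto (fun β => Gval t β) (nhdsWithin 1 (Set.Icc (0:ℝ) 1 \ {1}))
      (nhds (Gder a)) := by
    have h1 : Gval t 1 = Gder a := by simp [Gval, Gder, ht]
    have hc : Tendsto (fun β => Gval t β) (nhdsWithin 1 (Set.Icc (0:ℝ) 1)) (nhds (Gval t 1)) :=
      (gval_continuousOn hd htnn 1 (Set.mem_Icc.2 ⟨by norm_num, le_refl 1⟩)).tendsto
    rw [h1] at hc
    exact hc.mono_left (nhdsWithin_mono _ Set.diff_subset)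
  refine tendsto_of_tendsto_of_tendsto_of_le_of_le' hlow tendsto_const_nhds ?_ ?_
  · filter_upwards [self_mem_nhdsWithin] with β hβ
    exact (slope_bounds ha hnn hd hβ.1.1 hβ.1.2 hβ.2).1
  · filter_upwards [self_mem_nhdsWithin] with β hβ
    exact (slope_bounds ha hnn hd hβ.1.1 hβ.1.2 hβ.2).2

end helpers

section quadruple
variable {a b cc d : ℕ → ℝ}

lemma fval_at_one : Fval 1 a b cc d 1 = Gone a - Gone d := by
  simp only [Fval, gval_one, pow_one]; ring

lemma arg_at_one : Fval 1 a b cc d 1 ^ 2 + 4 * Gval a 1 * Gval d 1 = (Gone a + Gone d) ^ 2 := by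
  rw [fval_at_one, gval_one, gval_one]; ring

lemma hval_at_one (hA : 0 < Gone a) (hD : 0 < Gone d) (x : ℝ) :
    hval 1 a b cc d x 1 = (x - 1) * (Gone a + Gone d) := by
  have hs : Real.sqrt (Fval 1 a b cc d 1 ^ 2 + 4 * Gval a 1 * Gval d 1) = Gone a + Gone d := by
    rw [arg_at_one]; exact Real.sqrt_sq (by linarith)
  simp only [hval]
  rw [hs]
  simp only [gval_one, pow_one]
  ring

lemma hval_at_zero (hb0 : b 0 = cc 0) (h0 : a 0 * d 0 = 0) (x : ℝ) :
    hval 1 a b cc d x 0 = b 0 + cc 0 := by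
  have hF0 : Fval 1 a b cc d 0 = 0 := by
    simp [Fval, gval_zero, hb0]
  have h4 : (4:ℝ) * a 0 * d 0 = 0 := by
    rw [mul_assoc, h0, mul_zero]
  simp [hval, hF0, h4, gval_zero]

lemma hval_continuousOn
    (sa : Summable a) (sb : Summable b) (sc : Summable cc) (sd : Summable d)
    (na : ∀ m, 0 ≤ a m) (nb : ∀ m, 0 ≤ b m) (nc : ∀ m, 0 ≤ cc m) (nd : ∀ m, 0 ≤ d m)
    (x : ℝ) :
    ContinuousOn (fun β => hval 1 a b cc d x β) (Set.Icc (0:ℝ) 1) := by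
  have cA := gval_continuousOn sa na
  have cB := gval_continuousOn sb nb
  have cC := gval_continuousOn sc nc
  have cD := gval_continuousOn sd nd
  have cF : ContinuousOn (fun β => Fval 1 a b cc d β) (Set.Icc (0:ℝ) 1) := by
    exact (((continuous_pow 1).continuousOn.mul continuousOn_const).sub cB).add cC
  exact ((((continuousOn_const.mul (((cF.pow 2).add
    ((continuousOn_const.mul cA).mul cD)).sqrt)).add cB).add cC).sub
    ((continuous_pow 1).continuousOn.mul continuousOn_const))

lemma hval_hasDeriv
    (sa : Summable a) (sb : Summable b) (sc : Summable cc) (sd : Summable d)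
    (na : ∀ m, 0 ≤ a m) (nb : ∀ m, 0 ≤ b m) (nc : ∀ m, 0 ≤ cc m) (nd : ∀ m, 0 ≤ d m)
    (da : Summable (fun m : ℕ => (m:ℝ) * a m)) (db : Summable (fun m : ℕ => (m:ℝ) * b m))
    (dc : Summable (fun m : ℕ => (m:ℝ) * cc m)) (dd : Summable (fun m : ℕ => (m:ℝ) * d m))
    (hA : 0 < Gone a) (hD : 0 < Gone d) :
    HasDerivWithinAt (fun β => hval 1 a b cc d 1 β)
      (2 * ((Gone d * (Gder a - Gone a + Gder b - Gone b)
        + Gone a * (Gder cc - Gone cc + Gder d - Gone d)) / (Gone a + Gone d)))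
      (Set.Icc (0:ℝ) 1) 1 := by
  have HA := hasDerivWithinAt_gval sa na da
  have HB := hasDerivWithinAt_gval sb nb db
  have HC := hasDerivWithinAt_gval sc nc dc
  have HD := hasDerivWithinAt_gval sd nd dd
  have hF : HasDerivWithinAt (fun β => Fval 1 a b cc d β)
      (((1:ℕ) * (1:ℝ) ^ (1-1)) * (Gone a + Gone b - Gone cc - Gone d) - Gder b + Gder cc)
      (Set.Icc (0:ℝ) 1) 1 :=
    (((hasDerivWithinAt_pow 1 1).mul_const _).sub HB).add HC
  have hQ : HasDerivWithinAt
      (fun β => Fval 1 a b cc d β ^ 2 + 4 * Gval a β * Gval d β)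
      ((2:ℕ) * Fval 1 a b cc d 1 ^ (2-1)
          * (((1:ℕ) * (1:ℝ) ^ (1-1)) * (Gone a + Gone b - Gone cc - Gone d) - Gder b + Gder cc)
        + ((4 * Gder a) * Gval d 1 + (4 * Gval a 1) * Gder d))
      (Set.Icc (0:ℝ) 1) 1 :=
    (hF.pow 2).add ((HA.const_mul 4).mul HD)
  have hargne : Fval 1 a b cc d 1 ^ 2 + 4 * Gval a 1 * Gval d 1 ≠ 0 := by
    rw [arg_at_one]; positivity
  have hsqrt := (Real.hasDerivAt_sqrt hargne).comp_hasDerivWithinAt 1 hQ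
  have hsval : Real.sqrt (Fval 1 a b cc d 1 ^ 2 + 4 * Gval a 1 * Gval d 1)
      = Gone a + Gone d := by
    rw [arg_at_one]; exact Real.sqrt_sq (by linarith)
  have htot := (((hsqrt.const_mul (1:ℝ)).add HB).add HC).sub
    ((hasDerivWithinAt_pow (s := Set.Icc (0:ℝ) 1) 1 1).mul_const
      (Gone a + Gone b + Gone cc + Gone d))
  have heq : (fun β => hval 1 a b cc d 1 β)
      = fun β => (1 : ℝ) * ((fun y => Real.sqrt y) ∘
          fun β => Fval 1 a b cc d β ^ 2 + 4 * Gval a β * Gval d β) β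
        + Gval b β + Gval cc β - β ^ 1 * (Gone a + Gone b + Gone cc + Gone d) := by
    funext β; simp [hval, Function.comp]
  rw [heq]
  refine htot.congr_deriv ?_
  rw [hsval, fval_at_one, gval_one, gval_one]
  have hne : Gone a + Gone d ≠ 0 := by linarith
  field_simp
  ring

end quadruple

/-- Assumption 2.1 of the paper (the coefficient `a i 0` encodes `a_{K,i}`). -/
structure Assumption21 (c K : ℕ) (a b cc d : Fin c → ℕ → ℝ) : Prop where
  nna : ∀ i m, 0 ≤ a i m
  nnb : ∀ i m, 0 ≤ b i m
  nnc : ∀ i m, 0 ≤ cc i m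
  nnd : ∀ i m, 0 ≤ d i m
  suma : ∀ i, Summable (a i)
  sumb : ∀ i, Summable (b i)
  sumc : ∀ i, Summable (cc i)
  sumd : ∀ i, Summable (d i)
  posA : ∀ i, 0 < Gone (a i)
  posD : ∀ i, 0 < Gone (d i)
  dera : ∀ i, Summable (fun m : ℕ => (m : ℝ) * a i m)
  derb : ∀ i, Summable (fun m : ℕ => (m : ℝ) * b i m)
  derc : ∀ i, Summable (fun m : ℕ => (m : ℝ) * cc i m)
  derd : ∀ i, Summable (fun m : ℕ => (m : ℝ) * d i m)
  hiv : ∀ i, a i 0 = 0 ∨ d i 0 = 0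
  hv1 : ∀ i, b i 0 = cc i 0
  hv2 : ∀ i, b i 0 ≠ 0

/-- The right-hand side of the ergodicity condition (2.6). -/
noncomputable def ergo (c K : ℕ) (a b cc d : Fin c → ℕ → ℝ) : ℝ :=
  ∑ i : Fin c,
    (Gone (d i) * (Gder (a i) - K * Gone (a i) + Gder (b i) - K * Gone (b i))
      + Gone (a i) * (Gder (cc i) - K * Gone (cc i) + Gder (d i) - K * Gone (d i)))
      / (Gone (a i) + Gone (d i))

/-- For `K = 1`, under Assumption 2.1 and the ergodicity condition (2.6), for every sign
vector `x ∈ {-1,1}^c` the equation `Σ_{i=1}^c h_i(β₀) = 0` has at least one root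
`β₀ ∈ (0,1)`. -/
theorem stmt0 (c : ℕ) (hc : 1 ≤ c) (a b cc d : Fin c → ℕ → ℝ)
    (h21 : Assumption21 c 1 a b cc d) (herg : 0 < ergo c 1 a b cc d)
    (x : Fin c → ℝ) (hx : ∀ i, x i = 1 ∨ x i = -1) :
    ∃ β₀ ∈ Set.Ioo (0 : ℝ) 1,
      ∑ i : Fin c, hval 1 (a i) (b i) (cc i) (d i) (x i) β₀ = 0 := by
  have hne : Nonempty (Fin c) := ⟨⟨0, hc⟩⟩
  set g : ℝ → ℝ := fun β => ∑ i : Fin c, hval 1 (a i) (b i) (cc i) (d i) (x i) β with hg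
  -- value at 0
  have hg0 : 0 < g 0 := by
    refine Finset.sum_pos (fun i _ => ?_) Finset.univ_nonempty
    have hiv0 : a i 0 * d i 0 = 0 := by
      rcases h21.hiv i with h | h <;> simp [h]
    rw [hval_at_zero (h21.hv1 i) hiv0]
    have := h21.nnb i 0
    have h2 := h21.hv2 i
    have : 0 < b i 0 := lt_of_le_of_ne this (Ne.symm h2)
    rw [← h21.hv1 i]
    linarith
  -- continuity
  have hcont : ContinuousOn g (Set.Icc (0:ℝ) 1) :=
    continuousOn_finset_sum _ fun i _ =>
      hval_continuousOn (h21.suma i) (h21.sumb i) (h21.sumc i) (h21.sumd i)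
        (h21.nna i) (h21.nnb i) (h21.nnc i) (h21.nnd i) (x i)
  -- find β₁ ∈ Ioc 0 1 with g β₁ < 0
  have hneg : ∃ β₁ ∈ Set.Ioc (0:ℝ) 1, g β₁ < 0 := by
    by_cases hall : ∀ i, x i = 1
    · -- derivative argument at 1
      have hg1 : g 1 = 0 := by
        rw [hg]
        refine Finset.sum_eq_zero fun i _ => ?_
        rw [hall i, hval_at_one (h21.posA i) (h21.posD i)]
        ring
      have hder : HasDerivWithinAt g (2 * ergo c 1 a b cc d) (Set.Icc (0:ℝ) 1) 1 := by
        rw [ergo, Finset.mul_sum]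
        refine HasDerivWithinAt.fun_sum fun i _ => ?_
        have := hval_hasDeriv (h21.suma i) (h21.sumb i) (h21.sumc i) (h21.sumd i)
          (h21.nna i) (h21.nnb i) (h21.nnc i) (h21.nnd i)
          (h21.dera i) (h21.derb i) (h21.derc i) (h21.derd i)
          (h21.posA i) (h21.posD i)
        rw [hall i]
        refine this.congr_deriv ?_
        push_cast
        ring
      rw [hasDerivWithinAt_iff_tendsto_slope] at hder
      have hpos : (0:ℝ) < 2 * ergo c 1 a b cc d := by linarith
      have hev : ∀ᶠ β in nhdsWithin 1 (Set.Icc (0:ℝ) 1 \ {1}), 0 < slope g 1 β :=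
        hder.eventually (eventually_gt_nhds hpos)
      have hmono : nhdsWithin (1:ℝ) (Set.Ioo 0 1) ≤ nhdsWithin 1 (Set.Icc (0:ℝ) 1 \ {1}) :=
        nhdsWithin_mono _ (fun y hy => ⟨⟨le_of_lt hy.1, le_of_lt hy.2⟩, ne_of_lt hy.2⟩)
      have hnb : (nhdsWithin (1:ℝ) (Set.Ioo 0 1)).NeBot := by
        rw [← mem_closure_iff_nhdsWithin_neBot, closure_Ioo (by norm_num : (0:ℝ) ≠ 1)]
        exact ⟨by norm_num, le_rfl⟩
      obtain ⟨β₁, hβ₁s, hβ₁m⟩ := ((hev.filter_mono hmono).and self_mem_nhdsWithin).exists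
      refine ⟨β₁, ⟨hβ₁m.1, le_of_lt hβ₁m.2⟩, ?_⟩
      rw [slope_def_field, hg1, sub_zero] at hβ₁s
      have hb : β₁ - 1 < 0 := by linarith [hβ₁m.2]
      have h2 : g β₁ = g β₁ / (β₁ - 1) * (β₁ - 1) :=
        (div_mul_cancel₀ _ (by linarith : β₁ - (1:ℝ) ≠ 0)).symm
      rw [h2]
      exact mul_neg_of_pos_of_neg hβ₁s hb
    · push_neg at hall
      obtain ⟨i₀, hi₀⟩ := hall
      have hxi₀ : x i₀ = -1 := (hx i₀).resolve_left hi₀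
      refine ⟨1, ⟨one_pos, le_rfl⟩, ?_⟩
      have : g 1 < ∑ _i : Fin c, (0:ℝ) := by
        refine Finset.sum_lt_sum (fun i _ => ?_) ⟨i₀, Finset.mem_univ _, ?_⟩
        · rw [hval_at_one (h21.posA i) (h21.posD i)]
          have hAD : 0 < Gone (a i) + Gone (d i) := by
            linarith [h21.posA i, h21.posD i]
          rcases hx i with h | h <;> rw [h] <;> nlinarith
        · rw [hval_at_one (h21.posA i₀) (h21.posD i₀), hxi₀]
          have hAD : 0 < Gone (a i₀) + Gone (d i₀) := by
            linarith [h21.posA i₀, h21.posD i₀]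
          nlinarith
      simpa using this
  obtain ⟨β₁, hβ₁m, hβ₁neg⟩ := hneg
  -- IVT on [0, β₁]
  have hsub : Set.Icc (0:ℝ) β₁ ⊆ Set.Icc (0:ℝ) 1 :=
    Set.Icc_subset_Icc le_rfl hβ₁m.2
  have hivt := intermediate_value_Icc' (le_of_lt hβ₁m.1) (hcont.mono hsub)
  have h0mem : (0:ℝ) ∈ Set.Icc (g β₁) (g 0) := ⟨le_of_lt hβ₁neg, le_of_lt hg0⟩
  obtain ⟨β₀, hβ₀m, hβ₀⟩ := hivt h0mem
  refine ⟨β₀, ⟨?_, ?_⟩, hβ₀⟩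
  · rcases lt_or_eq_of_le hβ₀m.1 with h | h
    · exact h
    · exfalso; rw [← h] at hβ₀; linarith
  · rcases lt_or_eq_of_le hβ₀m.2 with h | h
    · exact lt_of_lt_of_le h hβ₁m.2
    · exfalso; rw [h] at hβ₀; linarith
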